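/- With the setup of a triangle-rhombus strip packing in a triangular torus, Im(g) + a·√3/2 = (c/(n1² + n1·n2 + n2²))·(√3/2). -/

import Mathlib

open Complex

theorem strip_packing_torus_height
    (c : ℝ) (hc : 0 < c) (a : ℕ) (b : ℤ) (n1 n2 n3 n4 : ℤ)
    (hdet : n1 * n4 - n2 * n3 = 1)
    (v g : ℂ) (hg_unit : ‖g‖ = 1) (hg_im : 0 < g.im)
    (hgen1 : (c : ℂ) = ((n1 : ℂ) + (n2 : ℂ) * Complex.exp (Real.pi / 3 * Complex.I)) * v)
    (hgen2 : g + (a : ℂ) * Complex.exp (Real.pi / 3 * Complex.I) + (b : ℂ)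
        = ((n3 : ℂ) + (n4 : ℂ) * Complex.exp (Real.pi / 3 * Complex.I)) * v) :
    g.im + (a : ℝ) * (Real.sqrt 3 / 2)
      = (c / ((n1 ^ 2 + n1 * n2 + n2 ^ 2 : ℤ) : ℝ)) * (Real.sqrt 3 / 2) := by
  set s : ℝ := Real.sqrt 3 / 2 with hs_def
  have hs : s ^ 2 = 3 / 4 := by
    rw [hs_def, div_pow, Real.sq_sqrt (by norm_num : (3:ℝ) ≥ 0)]
    norm_num
  have hωe : Complex.exp (Real.pi / 3 * Complex.I) = Complex.mk (1/2) s := by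
    have : (Real.pi / 3 : ℂ) = ((Real.pi / 3 : ℝ) : ℂ) := by push_cast; ring
    rw [this, Complex.exp_mul_I, ← Complex.ofReal_cos, ← Complex.ofReal_sin,
      Real.cos_pi_div_three, Real.sin_pi_div_three]
    rw [Complex.ext_iff]
    simp [hs_def]
  rw [hωe] at hgen1 hgen2
  rw [Complex.ext_iff] at hgen1 hgen2
  obtain ⟨h1, h1p⟩ := hgen1
  obtain ⟨h2re, h2⟩ := hgen2
  simp [Complex.add_re, Complex.add_im, Complex.mul_re, Complex.mul_im] at h1 h1p h2
  have hNint : n1 ^ 2 + n1 * n2 + n2 ^ 2 ≠ 0 := by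
    intro h
    have h4 : (2 * n1 + n2) ^ 2 + 3 * n2 ^ 2 = 0 := by linear_combination 4 * h
    have hb : n2 = 0 := by
      have : n2 ^ 2 = 0 := by nlinarith [sq_nonneg (2 * n1 + n2), sq_nonneg n2]
      exact sq_eq_zero_iff.mp this
    have ha : n1 = 0 := by
      have : n1 ^ 2 = 0 := by nlinarith [sq_nonneg n1]
      exact sq_eq_zero_iff.mp this
    rw [ha, hb] at hdet
    simp at hdet
  have hN : ((n1 ^ 2 + n1 * n2 + n2 ^ 2 : ℤ) : ℝ) ≠ 0 := Int.cast_ne_zero.mpr hNint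
  have hdetR : (n1 : ℝ) * n4 - n2 * n3 = 1 := by exact_mod_cast hdet
  have hvi : ((n1 : ℝ) ^ 2 + n1 * n2 + n2 ^ 2) * v.im = -(n2 * s) * c := by
    linear_combination (-((n1 : ℝ) + n2 / 2)) * h1p + (n2 : ℝ) * s * h1 - (n2 : ℝ) ^ 2 * v.im * hs
  have hvr : ((n1 : ℝ) ^ 2 + n1 * n2 + n2 ^ 2) * v.re = ((n1 : ℝ) + n2 / 2) * c := by
    linear_combination (-((n1 : ℝ) + n2 / 2)) * h1 - (n2 : ℝ) * s * h1p - (n2 : ℝ) ^ 2 * v.re * hs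
  rw [div_mul_eq_mul_div, eq_div_iff hN]
  push_cast
  linear_combination ((n1 : ℝ) ^ 2 + n1 * n2 + n2 ^ 2) * h2 + ((n3 : ℝ) + n4 / 2) * hvi
    + (n4 : ℝ) * s * hvr + s * c * hdetR
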